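/- Let N ≥ 1 and define F_N(p,z) = Σ_{τ∈S_N} sgn(τ) · exp(i Σ_{j=1}^{N} z_{τ(j)} p_j) for p, z ∈ ℂ^N. Then there exists an entire function H on ℂ^N × ℂ^N such that F_N(p,z) = H(p,z) · ∏_{1≤m<n≤N} (p_m−p_n)(z_m−z_n) for all p, z ∈ ℂ^N, and H(0,0) = i^{N(N−1)/2} / (1!·2!⋯(N−1)!). -/

import Mathlib

open Complex Finset

noncomputable section St6
namespace St6

/-- complete homogeneous symmetric "polynomial" in the first `a` values of `x`, degree `t`. -/
def hh : ℕ → ℕ → (ℕ → ℂ) → ℂ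
  | 0, t, _ => if t = 0 then 1 else 0
  | a+1, t, x => ∑ u ∈ Finset.range (t+1), x a ^ u * hh a (t - u) x

lemma hh_zero_t (a : ℕ) (x : ℕ → ℂ) : hh a 0 x = 1 := by
  induction a with
  | zero => simp [hh]
  | succ a ih => simp [hh, ih]

lemma hh_succ (a t : ℕ) (x : ℕ → ℂ) :
    hh (a+1) t x = ∑ u ∈ Finset.range (t+1), x a ^ u * hh a (t - u) x := rfl

lemma hh_rec (a t : ℕ) (x : ℕ → ℂ) :
    hh (a+1) (t+1) x = x a * hh (a+1) t x + hh a (t+1) x := by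
  rw [hh_succ a (t+1), Finset.sum_range_succ']
  have h : ∀ u, x a ^ (u+1) * hh a (t+1-(u+1)) x = x a * (x a ^ u * hh a (t-u) x) := by
    intro u
    rw [Nat.succ_sub_succ, pow_succ]
    ring
  simp only [h, ← Finset.mul_sum, pow_zero, one_mul, Nat.sub_zero, hh_succ a t]

lemma hh_zero_x (a t : ℕ) (ht : t ≠ 0) : hh a t (fun _ => 0) = 0 := by
  induction a with
  | zero => simp [hh, ht]
  | succ a ih =>
    rw [hh_succ]
    apply Finset.sum_eq_zero
    intro u _
    match u with
    | 0 => simpa using ih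
    | v+1 => simp

lemma hh_bound {R : ℝ} (hR : 0 ≤ R) (x : ℕ → ℂ) (hx : ∀ i, ‖x i‖ ≤ R) :
    ∀ a t, ‖hh a t x‖ ≤ (t+1:ℝ)^a * R^t := by
  intro a
  induction a with
  | zero =>
    intro t
    rcases Nat.eq_zero_or_pos t with h | h
    · subst h; simp [hh]
    · rw [show hh 0 t x = if t = 0 then 1 else 0 from rfl, if_neg h.ne']
      have : (0:ℝ) ≤ (t+1:ℝ)^0 * R^t := by positivity
      simpa using this
  | succ a ih =>
    intro t
    rw [hh_succ]
    calc ‖∑ u ∈ Finset.range (t+1), x a ^ u * hh a (t - u) x‖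
        ≤ ∑ u ∈ Finset.range (t+1), ‖x a ^ u * hh a (t - u) x‖ := norm_sum_le _ _
      _ ≤ ∑ _u ∈ Finset.range (t+1), (t+1:ℝ)^a * R^t := by
          apply Finset.sum_le_sum
          intro u hu
          rw [norm_mul, norm_pow]
          have h1 : ‖x a‖^u ≤ R^u := pow_le_pow_left₀ (norm_nonneg _) (hx a) u
          have h2 : ‖hh a (t-u) x‖ ≤ ((t-u:ℕ)+1:ℝ)^a * R^(t-u) := ih (t-u)
          have hut : u ≤ t := Nat.lt_succ_iff.mp (Finset.mem_range.mp hu)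
          have h3 : ((t-u:ℕ)+1:ℝ)^a ≤ (t+1:ℝ)^a := by
            apply pow_le_pow_left₀ (by positivity)
            exact_mod_cast Nat.succ_le_succ (Nat.sub_le t u)
          calc ‖x a‖^u * ‖hh a (t-u) x‖
              ≤ R^u * (((t-u:ℕ)+1:ℝ)^a * R^(t-u)) :=
                mul_le_mul h1 h2 (norm_nonneg _) (by positivity)
            _ ≤ R^u * ((t+1:ℝ)^a * R^(t-u)) := by
                gcongr
            _ = (t+1:ℝ)^a * (R^u * R^(t-u)) := by ring
            _ = (t+1:ℝ)^a * R^t := by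
                rw [← pow_add, Nat.add_sub_cancel' hut]
      _ = ((t:ℝ)+1) * ((t+1:ℝ)^a * R^t) := by
          rw [Finset.sum_const, Finset.card_range, nsmul_eq_mul]
          push_cast; ring
      _ = ((t:ℝ)+1)^(a+1) * R^t := by ring


/-- "Divided difference" coefficient: `gg a r x = h_{r-a}(x_0,…,x_a)` for `a ≤ r`, else 0. -/
def gg (a r : ℕ) (x : ℕ → ℂ) : ℂ := if a ≤ r then hh (a+1) (r - a) x else 0

lemma gg_rec (a r : ℕ) (x : ℕ → ℂ) :
    gg a (r+1) x = x a * gg a r x + (if a ≤ r+1 then hh a (r+1-a) x else 0) := by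
  unfold gg
  rcases le_or_gt a r with h | h
  · rw [if_pos (h.trans (Nat.le_succ r)), if_pos h, if_pos (h.trans (Nat.le_succ r)),
      show r + 1 - a = (r - a) + 1 by omega, hh_rec]
  · rcases eq_or_lt_of_le (Nat.succ_le_of_lt h) with h1 | h1
    · subst h1
      simp only [Nat.succ_eq_add_one]
      rw [if_pos le_rfl, if_neg (by omega), if_pos le_rfl, Nat.sub_self, hh_zero_t, hh_zero_t]
      ring
    · rw [if_neg (not_le.mpr h1), if_neg (not_le.mpr h), if_neg (not_le.mpr h1)]
      ring

/-- Newton interpolation: exactness of the Newton expansion of `x_m ^ r` at the node `x_m`. -/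
lemma newton (x : ℕ → ℂ) (m : ℕ) :
    ∀ r, ∑ a ∈ Finset.range (m+1), gg a r x * ∏ j ∈ Finset.range a, (x m - x j) = x m ^ r := by
  intro r
  induction r with
  | zero =>
    rw [Finset.sum_eq_single 0]
    · simp [gg, hh_zero_t]
    · intro a _ ha
      rw [gg, if_neg (by omega), zero_mul]
    · intro h
      exact absurd (Finset.mem_range.mpr (Nat.succ_pos m)) h
  | succ r ih =>
    have key : ∀ a, gg a (r+1) x * ∏ j ∈ Finset.range a, (x m - x j)
        = x a * gg a r x * ∏ j ∈ Finset.range a, (x m - x j)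
          + (if a ≤ r+1 then hh a (r+1-a) x else 0) * ∏ j ∈ Finset.range a, (x m - x j) := by
      intro a
      rw [gg_rec]
      ring
    rw [Finset.sum_congr rfl (fun a _ => key a), Finset.sum_add_distrib]
    have second : ∑ a ∈ Finset.range (m+1),
        (if a ≤ r+1 then hh a (r+1-a) x else 0) * ∏ j ∈ Finset.range a, (x m - x j)
        = ∑ a ∈ Finset.range (m+1), gg a r x * ((∏ j ∈ Finset.range a, (x m - x j)) * (x m - x a)) := by
      rw [Finset.sum_range_succ' (fun a => (if a ≤ r+1 then hh a (r+1-a) x else 0)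
            * ∏ j ∈ Finset.range a, (x m - x j))]
      have h0 : (if 0 ≤ r+1 then hh 0 (r+1-0) x else 0) * ∏ j ∈ Finset.range 0, (x m - x j) = 0 := by
        rw [if_pos (Nat.zero_le _)]
        simp [hh]
      rw [h0, add_zero]
      have hshift : ∀ a, (if a+1 ≤ r+1 then hh (a+1) (r+1-(a+1)) x else 0) = gg a r x := by
        intro a
        unfold gg
        rw [Nat.succ_sub_succ]
        congr 1
        simp [Nat.succ_le_succ_iff]
      rw [Finset.sum_congr rfl (fun a _ => by rw [hshift a, Finset.prod_range_succ])]
      rw [Finset.sum_range_succ (fun a => gg a r x * ((∏ j ∈ Finset.range a, (x m - x j)) * (x m - x a)))]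
      simp
    rw [second, ← Finset.sum_add_distrib]
    have : ∀ a, x a * gg a r x * ∏ j ∈ Finset.range a, (x m - x j)
          + gg a r x * ((∏ j ∈ Finset.range a, (x m - x j)) * (x m - x a))
        = x m * (gg a r x * ∏ j ∈ Finset.range a, (x m - x j)) := by
      intro a; ring
    rw [Finset.sum_congr rfl (fun a _ => this a), ← Finset.mul_sum, ih]
    ring

/-- Newton expansion summed up to any `N > m`. -/
lemma newtonN (x : ℕ → ℂ) {m N : ℕ} (hm : m < N) (r : ℕ) :
    ∑ a ∈ Finset.range N, gg a r x * ∏ j ∈ Finset.range a, (x m - x j) = x m ^ r := by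
  rw [← newton x m r]
  symm
  apply Finset.sum_subset
  · intro a ha
    exact Finset.mem_range.mpr (lt_of_lt_of_le (Finset.mem_range.mp ha) hm)
  · intro a _ ha
    have hma : m < a := by
      have := Finset.mem_range.not.mp ha
      omega
    rw [Finset.prod_eq_zero (Finset.mem_range.mpr hma) (sub_self (x m)), mul_zero]

lemma gg_bound {R : ℝ} (hR : 1 ≤ R) (x : ℕ → ℂ) (hx : ∀ i, ‖x i‖ ≤ R) (a r : ℕ) :
    ‖gg a r x‖ ≤ (r+1:ℝ)^(a+1) * R^r := by
  have hR0 : (0:ℝ) ≤ R := le_trans zero_le_one hR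
  unfold gg
  split
  · calc ‖hh (a+1) (r-a) x‖ ≤ ((r-a:ℕ)+1:ℝ)^(a+1) * R^(r-a) := hh_bound hR0 x hx (a+1) (r-a)
      _ ≤ (r+1:ℝ)^(a+1) * R^r := by
          apply mul_le_mul
          · apply pow_le_pow_left₀ (by positivity)
            exact_mod_cast Nat.succ_le_succ (Nat.sub_le r a)
          · exact pow_le_pow_right₀ hR (Nat.sub_le r a)
          · positivity
          · positivity
  · have : (0:ℝ) ≤ (r+1:ℝ)^(a+1) * R^r := by positivity
    simpa using this

/-- Generic term of the `Φ` series. -/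
def trm (a b : ℕ) (x y : ℕ → ℂ) (r : ℕ) : ℂ :=
  I ^ r / (Nat.factorial r : ℂ) * gg a r x * gg b r y

lemma trm_bound {R : ℝ} (hR : 1 ≤ R) (x y : ℕ → ℂ) (hx : ∀ i, ‖x i‖ ≤ R)
    (hy : ∀ i, ‖y i‖ ≤ R) (a b r : ℕ) :
    ‖trm a b x y r‖ ≤ ((2:ℝ)^(a+1) * 2^(b+1) * R^2)^r / (Nat.factorial r) := by
  have hR0 : (0:ℝ) ≤ R := le_trans zero_le_one hR
  have hpow : ∀ c : ℕ, (r+1:ℝ)^(c+1) ≤ ((2:ℝ)^(c+1))^r := by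
    intro c
    have h1 : (r+1:ℝ) ≤ (2:ℝ)^r := by
      exact_mod_cast Nat.lt_two_pow_self (n := r)
    calc (r+1:ℝ)^(c+1) ≤ ((2:ℝ)^r)^(c+1) := pow_le_pow_left₀ (by positivity) h1 _
      _ = ((2:ℝ)^(c+1))^r := by rw [← pow_mul, ← pow_mul, Nat.mul_comm]
  have hI : ‖(I:ℂ)^r / (Nat.factorial r : ℂ)‖ = 1 / (Nat.factorial r : ℝ) := by
    rw [norm_div, norm_pow, Complex.norm_I, one_pow]
    congr 1
    simp
  rw [trm, norm_mul, norm_mul, hI]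
  calc 1 / (Nat.factorial r : ℝ) * ‖gg a r x‖ * ‖gg b r y‖
      ≤ 1 / (Nat.factorial r : ℝ) * ((r+1:ℝ)^(a+1) * R^r) * ((r+1:ℝ)^(b+1) * R^r) := by
        apply mul_le_mul _ (gg_bound hR y hy b r) (norm_nonneg _) (by positivity)
        apply mul_le_mul_of_nonneg_left (gg_bound hR x hx a r) (by positivity)
    _ ≤ 1 / (Nat.factorial r : ℝ) * (((2:ℝ)^(a+1))^r * R^r) * (((2:ℝ)^(b+1))^r * R^r) := by
        have ha := hpow a
        have hb := hpow b
        have h1 : (0:ℝ) ≤ R^r := by positivity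
        have h2 : (0:ℝ) ≤ 1 / (Nat.factorial r : ℝ) := by positivity
        gcongr
    _ = ((2:ℝ)^(a+1) * 2^(b+1) * R^2)^r / (Nat.factorial r) := by
        rw [show ((2:ℝ)^(a+1) * 2^(b+1) * R^2)^r = ((2:ℝ)^(a+1))^r * ((2:ℝ)^(b+1))^r * (R^r * R^r) by
          rw [mul_pow, mul_pow, sq, mul_pow]]
        ring

lemma summable_trm {R : ℝ} (hR : 1 ≤ R) (x y : ℕ → ℂ) (hx : ∀ i, ‖x i‖ ≤ R)
    (hy : ∀ i, ‖y i‖ ≤ R) (a b : ℕ) : Summable (trm a b x y) := by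
  apply Summable.of_norm_bounded (Real.summable_pow_div_factorial ((2:ℝ)^(a+1) * 2^(b+1) * R^2))
  exact trm_bound hR x y hx hy a b

/-- The entries of the entire matrix `Φ`. -/
def Phi (a b : ℕ) (x y : ℕ → ℂ) : ℂ := ∑' r : ℕ, trm a b x y r


/-- Cauchy-type estimate: for an entire function, the derivative at `x` is bounded by the
sup of the function on the closed unit ball around `x`. -/
lemma fderiv_norm_le_of_ball {E : Type*} [NormedAddCommGroup E] [NormedSpace ℂ E]
    {f : E → ℂ} (hf : Differentiable ℂ f) (x : E) {C : ℝ}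
    (hC : ∀ y, ‖y - x‖ ≤ 1 → ‖f y‖ ≤ C) : ‖fderiv ℂ f x‖ ≤ C := by
  have hC0 : 0 ≤ C := le_trans (norm_nonneg (f x)) (hC x (by simp))
  apply ContinuousLinearMap.opNorm_le_bound _ hC0
  intro v
  rcases eq_or_ne v 0 with rfl | hv
  · simp
  · set w : E := ((‖v‖ : ℂ))⁻¹ • v with hw_def
    have hnv : (0:ℝ) < ‖v‖ := norm_pos_iff.mpr hv
    have hw : ‖w‖ = 1 := by
      rw [hw_def, norm_smul, norm_inv, Complex.norm_real, Real.norm_eq_abs, abs_norm]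
      field_simp
    have key : ‖fderiv ℂ f x w‖ ≤ C := by
      set φ : ℂ → ℂ := fun t => f (x + t • w) with hφ_def
      have hline : Differentiable ℂ (fun t : ℂ => x + t • w) :=
        (differentiable_const x).add (differentiable_id.smul_const w)
      have hφ : Differentiable ℂ φ := hf.comp hline
      have hd : HasDerivAt φ (fderiv ℂ f x w) 0 := by
        have h1 : HasDerivAt (fun t : ℂ => x + t • w) w 0 := by
          simpa using ((hasDerivAt_id (0:ℂ)).smul_const w).const_add x
        have h2 : HasFDerivAt f (fderiv ℂ f x) (x + (0:ℂ) • w) := by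
          simpa using (hf (x + (0:ℂ) • w)).hasFDerivAt
        exact h2.comp_hasDerivAt 0 h1
      have hsp : ∀ t ∈ Metric.sphere (0:ℂ) 1, ‖φ t‖ ≤ C := by
        intro t ht
        have hts : ‖t‖ = 1 := by simpa using ht
        apply hC
        rw [add_sub_cancel_left, norm_smul, hts, hw, mul_one]
      have hbd := Complex.norm_deriv_le_of_forall_mem_sphere_norm_le (c := (0:ℂ)) (R := 1)
        zero_lt_one hφ.diffContOnCl hsp
      rw [hd.deriv] at hbd
      simpa using hbd
    have hv' : v = (‖v‖ : ℂ) • w := by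
      rw [hw_def, smul_smul, mul_inv_cancel₀ (by exact_mod_cast hnv.ne'), one_smul]
    calc ‖fderiv ℂ f x v‖ = ‖fderiv ℂ f x ((‖v‖:ℂ) • w)‖ := by rw [← hv']
      _ = ‖v‖ * ‖fderiv ℂ f x w‖ := by
          rw [map_smul, norm_smul, Complex.norm_real, Real.norm_eq_abs, abs_norm]
      _ ≤ ‖v‖ * C := by
          exact mul_le_mul_of_nonneg_left key (norm_nonneg v)
      _ = C * ‖v‖ := mul_comm _ _


section withN
variable {N : ℕ}

/-- Extend a vector in `ℂ^N` to a function on `ℕ` by zero. -/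
def ext (w : Fin N → ℂ) (j : ℕ) : ℂ := if h : j < N then w ⟨j, h⟩ else 0

lemma ext_coord_le (w : Fin N → ℂ) (j : ℕ) : ‖ext w j‖ ≤ max 1 ‖w‖ := by
  unfold ext
  split
  · exact le_trans (norm_le_pi_norm w _) (le_max_right _ _)
  · rw [norm_zero]
    exact le_trans zero_le_one (le_max_left _ _)

lemma ext_val (w : Fin N → ℂ) (m : Fin N) : ext w (m : ℕ) = w m := by
  unfold ext
  rw [dif_pos m.isLt]

lemma ext_zero : ext (0 : Fin N → ℂ) = fun _ => 0 := by
  funext j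
  unfold ext
  split <;> simp

lemma diff_ext (j : ℕ) : Differentiable ℂ (fun w : Fin N → ℂ => ext w j) := by
  unfold ext
  by_cases h : j < N
  · simp only [dif_pos h]
    exact (ContinuousLinearMap.proj (⟨j, h⟩ : Fin N) : (Fin N → ℂ) →L[ℂ] ℂ).differentiable
  · simp only [dif_neg h]
    exact differentiable_const 0

lemma diff_hh (a t : ℕ) : Differentiable ℂ (fun w : Fin N → ℂ => hh a t (ext w)) := by
  induction a generalizing t with
  | zero => exact differentiable_const _
  | succ a ih =>
    simp only [hh_succ]
    exact Differentiable.fun_sum (fun u _ => ((diff_ext a).pow u).mul (ih (t - u)))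

lemma diff_gg (a r : ℕ) : Differentiable ℂ (fun w : Fin N → ℂ => gg a r (ext w)) := by
  unfold gg
  by_cases h : a ≤ r
  · simp only [if_pos h]
    exact diff_hh (a+1) (r-a)
  · simp only [if_neg h]
    exact differentiable_const 0

lemma diff_trm (a b r : ℕ) :
    Differentiable ℂ (fun pz : (Fin N → ℂ) × (Fin N → ℂ) => trm a b (ext pz.2) (ext pz.1) r) := by
  unfold trm
  exact ((differentiable_const _).mul ((diff_gg a r).comp differentiable_snd)).mul
    ((diff_gg b r).comp differentiable_fst)

lemma diff_Phi (a b : ℕ) :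
    Differentiable ℂ (fun pz : (Fin N → ℂ) × (Fin N → ℂ) => Phi a b (ext pz.2) (ext pz.1)) := by
  intro x₀
  set f : ℕ → ((Fin N → ℂ) × (Fin N → ℂ)) → ℂ :=
    fun r pz => trm a b (ext pz.2) (ext pz.1) r with hf_def
  set Rb : ℝ := max 1 (‖x₀‖ + 3) with hRb_def
  have hRb1 : (1:ℝ) ≤ Rb := le_max_left _ _
  set s := Metric.ball (0 : (Fin N → ℂ) × (Fin N → ℂ)) (‖x₀‖ + 2) with hs_def
  have hx₀s : x₀ ∈ s := by
    rw [hs_def, Metric.mem_ball, dist_zero_right]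
    linarith
  have hcoord : ∀ y : (Fin N → ℂ) × (Fin N → ℂ), ‖y‖ ≤ ‖x₀‖ + 3 →
      (∀ i, ‖ext y.2 i‖ ≤ Rb) ∧ (∀ i, ‖ext y.1 i‖ ≤ Rb) := by
    intro y hy
    constructor
    · intro i
      refine le_trans (ext_coord_le y.2 i) (max_le hRb1 ?_)
      exact le_trans (le_trans (norm_snd_le y) hy) (le_max_right _ _)
    · intro i
      refine le_trans (ext_coord_le y.1 i) (max_le hRb1 ?_)
      exact le_trans (le_trans (norm_fst_le y) hy) (le_max_right _ _)
  have key := hasFDerivAt_tsum_of_isPreconnected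
    (u := fun r => ((2:ℝ)^(a+1) * 2^(b+1) * Rb^2)^r / (Nat.factorial r))
    (f := f) (f' := fun r pz => fderiv ℂ (f r) pz)
    (Real.summable_pow_div_factorial _) Metric.isOpen_ball
    (convex_ball _ _).isPreconnected
    (fun r pz _ => ((diff_trm a b r) pz).hasFDerivAt)
    (fun r pz hpz => by
      apply fderiv_norm_le_of_ball (diff_trm a b r)
      intro y hy
      have hpzn : ‖pz‖ < ‖x₀‖ + 2 := by
        rw [Metric.mem_ball, dist_zero_right] at hpz
        exact hpz
      have htri : ‖y‖ ≤ ‖y - pz‖ + ‖pz‖ := by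
        simpa using norm_add_le (y - pz) pz
      have hyn : ‖y‖ ≤ ‖x₀‖ + 3 := by linarith
      obtain ⟨h2, h1⟩ := hcoord y hyn
      exact trm_bound hRb1 _ _ h2 h1 a b r)
    hx₀s
    (by
      obtain ⟨h2, h1⟩ := hcoord x₀ (by linarith [norm_nonneg x₀])
      exact summable_trm hRb1 _ _ h2 h1 a b)
    hx₀s
  exact key.differentiableAt

lemma diff_fprod {E : Type*} [NormedAddCommGroup E] [NormedSpace ℂ E] {ι : Type*}
    (s : Finset ι) (f : ι → E → ℂ) (h : ∀ i, Differentiable ℂ (f i)) :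
    Differentiable ℂ (fun x => ∏ i ∈ s, f i x) := by
  classical
  induction s using Finset.induction with
  | empty => simp only [Finset.prod_empty]; exact differentiable_const (1:ℂ)
  | insert _ _ hns ih =>
    simp only [Finset.prod_insert hns]
    exact (h _).mul ih


lemma vand_eq (v : Fin N → ℂ) :
    ∏ m : Fin N, ∏ j ∈ Finset.range (m:ℕ), (ext v (m:ℕ) - ext v j)
      = ∏ q ∈ Finset.univ.filter (fun q : Fin N × Fin N => q.1 < q.2), (v q.2 - v q.1) := by
  rw [Finset.prod_filter, ← Finset.univ_product_univ, Finset.prod_product, Finset.prod_comm]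
  apply Finset.prod_congr rfl
  intro m _
  rw [← Finset.prod_filter]
  symm
  apply Finset.prod_nbij' (fun a : Fin N => (a : ℕ))
    (fun jn : ℕ => if h : jn < N then (⟨jn, h⟩ : Fin N) else m)
  · intro a ha
    rw [Finset.mem_filter] at ha
    exact Finset.mem_range.mpr ha.2
  · intro jn hjn
    have h1 : jn < (m:ℕ) := Finset.mem_range.mp hjn
    have h2 : jn < N := lt_trans h1 m.isLt
    rw [dif_pos h2, Finset.mem_filter]
    exact ⟨Finset.mem_univ _, h1⟩
  · intro a _
    rw [dif_pos a.isLt]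
  · intro jn hjn
    have h1 : jn < (m:ℕ) := Finset.mem_range.mp hjn
    rw [dif_pos (lt_trans h1 m.isLt)]
  · intro a ha
    rw [Finset.mem_filter] at ha
    rw [ext_val, show ext v (a:ℕ) = v a from ext_val v a]

lemma gg_zero_fun (a r : ℕ) : gg a r (fun _ => 0) = if r = a then 1 else 0 := by
  unfold gg
  by_cases h : a ≤ r
  · rw [if_pos h]
    by_cases h2 : r = a
    · rw [if_pos h2, h2, Nat.sub_self, hh_zero_t]
    · rw [if_neg h2, hh_zero_x _ _ (by omega)]
  · rw [if_neg h, if_neg (by omega)]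

lemma Phi_zero (a b : ℕ) :
    Phi a b (fun _ => 0) (fun _ => 0)
      = if a = b then I ^ a / (Nat.factorial a : ℂ) else 0 := by
  unfold Phi trm
  simp only [gg_zero_fun]
  by_cases hab : a = b
  · subst hab
    rw [if_pos rfl, tsum_eq_single a]
    · rw [if_pos rfl]
      ring
    · intro r hr
      simp [hr]
  · rw [if_neg hab]
    have hz : ∀ r : ℕ, I ^ r / (Nat.factorial r : ℂ) * (if r = a then 1 else 0)
        * (if r = b then 1 else 0) = 0 := by
      intro r
      rcases eq_or_ne r a with rfl | h1
      · simp [hab]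
      · simp [h1]
    rw [tsum_congr hz, tsum_zero]

end withN
end St6

open St6 in
/-- Factorization of the antisymmetrized exponential
`F_N(p,z) = Σ_{τ∈S_N} sgn(τ) exp(i Σ_j z_{τ(j)} p_j)`: there is an entire function `H` on
`ℂ^N × ℂ^N` with `F_N(p,z) = H(p,z) ∏_{m<n}(p_m−p_n)(z_m−z_n)` and
`H(0,0) = i^{N(N−1)/2}/(1!·2!⋯(N−1)!)`. -/
theorem statement6 (N : ℕ) (hN : 1 ≤ N) :
    ∃ H : (Fin N → ℂ) × (Fin N → ℂ) → ℂ,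
      Differentiable ℂ H ∧
      (∀ p z : Fin N → ℂ,
        (∑ τ : Equiv.Perm (Fin N), ((Equiv.Perm.sign τ : ℤ) : ℂ) *
            Complex.exp (Complex.I * ∑ j : Fin N, z (τ j) * p j))
        = H (p, z) *
          ∏ q ∈ Finset.univ.filter (fun q : Fin N × Fin N => q.1 < q.2),
            (p q.1 - p q.2) * (z q.1 - z q.2)) ∧
      H (0, 0) = Complex.I ^ (N * (N - 1) / 2) /
        ∏ j ∈ Finset.range N, (Nat.factorial j : ℂ) := by
  classical
  refine ⟨fun pz => Matrix.det (Matrix.of fun a b : Fin N =>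
      Phi (a:ℕ) (b:ℕ) (ext pz.2) (ext pz.1)), ?_, ?_, ?_⟩
  · -- differentiability
    simp only [Matrix.det_apply', Matrix.of_apply]
    apply Differentiable.fun_sum
    intro σ _
    exact (differentiable_const _).mul
      (diff_fprod Finset.univ _ (fun i => diff_Phi (σ i : ℕ) (i : ℕ)))
  · -- the factorization identity
    intro p z
    set x : ℕ → ℂ := ext z with hx_def
    set y : ℕ → ℂ := ext p with hy_def
    set R : ℝ := max 1 (max ‖p‖ ‖z‖) with hR_def
    have hR1 : (1:ℝ) ≤ R := le_max_left _ _
    have hx : ∀ i, ‖x i‖ ≤ R :=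
      fun i => (ext_coord_le z i).trans (max_le_max le_rfl (le_max_right _ _))
    have hy : ∀ i, ‖y i‖ ≤ R :=
      fun i => (ext_coord_le p i).trans (max_le_max le_rfl (le_max_left _ _))
    set A : Matrix (Fin N) (Fin N) ℂ :=
      Matrix.of (fun m a : Fin N => ∏ j ∈ Finset.range (a:ℕ), (x (m:ℕ) - x j)) with hA_def
    set B : Matrix (Fin N) (Fin N) ℂ :=
      Matrix.of (fun n b : Fin N => ∏ j ∈ Finset.range (b:ℕ), (y (n:ℕ) - y j)) with hB_def
    set Φ : Matrix (Fin N) (Fin N) ℂ :=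
      Matrix.of (fun a b : Fin N => Phi (a:ℕ) (b:ℕ) x y) with hPhi_def
    set E : Matrix (Fin N) (Fin N) ℂ :=
      Matrix.of (fun m n : Fin N => Complex.exp (Complex.I * (z m * p n))) with hE_def
    -- Step 1 : LHS equals det E
    have step1 : (∑ τ : Equiv.Perm (Fin N), ((Equiv.Perm.sign τ : ℤ) : ℂ) *
            Complex.exp (Complex.I * ∑ j : Fin N, z (τ j) * p j)) = E.det := by
      rw [Matrix.det_apply']
      apply Finset.sum_congr rfl
      intro τ _
      congr 1
      rw [hE_def]
      simp only [Matrix.of_apply]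
      rw [← Complex.exp_sum, Finset.mul_sum]
    -- Step 2 : entrywise Newton expansion, E = A * Φ * Bᵀ
    have key : ∀ m n : Fin N, E m n =
        ∑ a ∈ Finset.range N, ∑ b ∈ Finset.range N,
          Phi a b x y * ((∏ j ∈ Finset.range a, (x (m:ℕ) - x j))
            * (∏ j ∈ Finset.range b, (y (n:ℕ) - y j))) := by
      intro m n
      have h1 : E m n = ∑' r : ℕ, ∑ a ∈ Finset.range N, ∑ b ∈ Finset.range N,
          trm a b x y r * ((∏ j ∈ Finset.range a, (x (m:ℕ) - x j))
            * (∏ j ∈ Finset.range b, (y (n:ℕ) - y j))) := by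
        rw [hE_def]
        simp only [Matrix.of_apply]
        rw [Complex.exp_eq_exp_ℂ, NormedSpace.exp_eq_tsum_div]
        apply tsum_congr
        intro r
        have hxm : x (m:ℕ) = z m := ext_val z m
        have hyn : y (n:ℕ) = p n := ext_val p n
        have hX := newtonN x m.isLt r
        have hY := newtonN y n.isLt r
        calc (Complex.I * (z m * p n)) ^ r / (Nat.factorial r : ℂ)
            = Complex.I ^ r / (Nat.factorial r : ℂ) * ((x (m:ℕ)) ^ r * (y (n:ℕ)) ^ r) := by
              rw [hxm, hyn, mul_pow, mul_pow]
              ring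
          _ = Complex.I ^ r / (Nat.factorial r : ℂ) *
              ((∑ a ∈ Finset.range N, gg a r x * ∏ j ∈ Finset.range a, (x (m:ℕ) - x j))
                * (∑ b ∈ Finset.range N, gg b r y * ∏ j ∈ Finset.range b, (y (n:ℕ) - y j))) := by
              rw [hX, hY]
          _ = ∑ a ∈ Finset.range N, ∑ b ∈ Finset.range N,
              trm a b x y r * ((∏ j ∈ Finset.range a, (x (m:ℕ) - x j))
                * (∏ j ∈ Finset.range b, (y (n:ℕ) - y j))) := by
              rw [Finset.sum_mul_sum, Finset.mul_sum]
              apply Finset.sum_congr rfl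
              intro a _
              rw [Finset.mul_sum]
              apply Finset.sum_congr rfl
              intro b _
              unfold trm
              ring
      rw [h1]
      rw [Summable.tsum_finsetSum (fun a _ => summable_sum
        (fun b _ => (summable_trm hR1 x y hx hy a b).mul_right _))]
      apply Finset.sum_congr rfl
      intro a _
      rw [Summable.tsum_finsetSum (fun b _ => (summable_trm hR1 x y hx hy a b).mul_right _)]
      apply Finset.sum_congr rfl
      intro b _
      rw [tsum_mul_right]
      rfl
    have hE : E = A * Φ * B.transpose := by
      ext m n
      rw [key m n]
      rw [Matrix.mul_apply]
      have : ∀ b' : Fin N, (A * Φ) m b' * B.transpose b' n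
          = ∑ a : Fin N, A m a * Φ a b' * B n b' := by
        intro b'
        rw [Matrix.mul_apply, Matrix.transpose_apply, Finset.sum_mul]
      rw [Finset.sum_congr rfl (fun b' _ => this b'), Finset.sum_comm]
      rw [← Fin.sum_univ_eq_sum_range (fun b => ∑ a ∈ Finset.range N,
          Phi a b x y * ((∏ j ∈ Finset.range a, (x (m:ℕ) - x j))
            * (∏ j ∈ Finset.range b, (y (n:ℕ) - y j)))) N]
      apply Finset.sum_congr rfl
      intro b' _
      rw [← Fin.sum_univ_eq_sum_range (fun a =>
          Phi a (b':ℕ) x y * ((∏ j ∈ Finset.range a, (x (m:ℕ) - x j))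
            * (∏ j ∈ Finset.range (b':ℕ), (y (n:ℕ) - y j)))) N]
      apply Finset.sum_congr rfl
      intro a _
      simp only [hA_def, hB_def, hPhi_def, Matrix.of_apply]
      ring
    -- Step 3 : determinants
    have hAdet : A.det = ∏ m : Fin N, ∏ j ∈ Finset.range (m:ℕ), (x (m:ℕ) - x j) := by
      rw [Matrix.det_of_lowerTriangular A (by
        intro i j hij
        have hij' : (i:ℕ) < (j:ℕ) := hij
        rw [hA_def]
        simp only [Matrix.of_apply]
        exact Finset.prod_eq_zero (Finset.mem_range.mpr hij') (sub_self _))]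
      apply Finset.prod_congr rfl
      intro m _
      rw [hA_def]
      simp only [Matrix.of_apply]
    have hBdet : B.det = ∏ n : Fin N, ∏ j ∈ Finset.range (n:ℕ), (y (n:ℕ) - y j) := by
      rw [Matrix.det_of_lowerTriangular B (by
        intro i j hij
        have hij' : (i:ℕ) < (j:ℕ) := hij
        rw [hB_def]
        simp only [Matrix.of_apply]
        exact Finset.prod_eq_zero (Finset.mem_range.mpr hij') (sub_self _))]
      apply Finset.prod_congr rfl
      intro n _
      rw [hB_def]
      simp only [Matrix.of_apply]
    have hAB : A.det * B.det = ∏ q ∈ Finset.univ.filter (fun q : Fin N × Fin N => q.1 < q.2),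
        (p q.1 - p q.2) * (z q.1 - z q.2) := by
      rw [hAdet, hBdet, hx_def, hy_def, vand_eq z, vand_eq p]
      rw [← Finset.prod_mul_distrib]
      apply Finset.prod_congr rfl
      intro q _
      ring
    rw [step1, hE, Matrix.det_mul, Matrix.det_mul, Matrix.det_transpose]
    rw [show A.det * Φ.det * B.det = Φ.det * (A.det * B.det) by ring, hAB]
  · -- value at (0,0)
    have hext : ext (0 : Fin N → ℂ) = fun _ => (0:ℂ) := ext_zero
    show (Matrix.of fun a b : Fin N =>
        Phi (a:ℕ) (b:ℕ) (ext (0 : Fin N → ℂ)) (ext (0 : Fin N → ℂ))).det = _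
    have hmat : (Matrix.of fun a b : Fin N =>
        Phi (a:ℕ) (b:ℕ) (ext (0 : Fin N → ℂ)) (ext (0 : Fin N → ℂ)))
        = Matrix.diagonal (fun a : Fin N => Complex.I ^ (a:ℕ) / (Nat.factorial (a:ℕ) : ℂ)) := by
      ext a b
      simp only [Matrix.of_apply]
      rw [hext, Phi_zero, Matrix.diagonal_apply]
      by_cases h : a = b
      · rw [if_pos ((Fin.val_eq_val a b).mpr h), if_pos h, h]
      · rw [if_neg (fun hc => h ((Fin.val_eq_val a b).mp hc)), if_neg h]
    rw [hmat, Matrix.det_diagonal]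
    rw [Finset.prod_div_distrib, Finset.prod_pow_eq_pow_sum]
    congr 1
    · congr 1
      rw [Fin.sum_univ_eq_sum_range (fun i => i) N, Finset.sum_range_id]
    · rw [Fin.prod_univ_eq_prod_range (fun j => (Nat.factorial j : ℂ)) N]
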